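/- Let A, B, C be noncollinear points in the plane with a = dist B C, b = dist A C, c = dist A B satisfying a ≤ b ≤ c, and angles β = ∠ A B C, γ = ∠ B C A. For a point D with dist D B = dist D C set f(D) := max( 2·dist(B,D)/a , (dist(A,D) + dist(B,D))/b ). Suppose tan β > sin γ. Define φ* ∈ (0, π/2) by tan φ* = 2·√(c² − (b−a)²) / ( √((3b−a)² − c²) + √((b+a)² − c²) ) (all three radicands are positive for a nondegenerate triangle with a ≤ b ≤ c), and let D* be the point on the perpendicular bisector of B and C, on the same side of line BC as A, at distance (a/2)·tan φ* from the midpoint of B and C. Then f(D*) = 1/cos φ*, and f(D) ≥ 1/cos φ* for every point D equidistant from B and C. Hence the minimum of f over the perpendicular bisector of B and C equals 1/cos φ* and is attained at D*. -/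

import Mathlib

set_option maxHeartbeats 1000000

open EuclideanGeometry

private lemma gather_aux_cs (Qv z zs AD ADs : ℝ) (hQ : 0 ≤ Qv) (hAD : 0 ≤ AD)
    (hADs : 0 ≤ ADs) (h1 : AD^2 = Qv + z^2) (h2 : ADs^2 = Qv + zs^2) :
    Qv + z*zs ≤ AD*ADs := by
  rcases le_or_gt (Qv + z*zs) 0 with hn | hp
  · exact hn.trans (mul_nonneg hAD hADs)
  · nlinarith [mul_nonneg hAD hADs, mul_nonneg hQ (sq_nonneg (z - zs)),
      sq_nonneg (AD*ADs - (Qv + z*zs)), sq_nonneg (AD - ADs)]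

private lemma gather_aux_tfacts (a b c y : ℝ) (ha0 : 0 < a) (hab : a ≤ b) (hbc : b ≤ c)
    (hy0 : 0 < y)
    (hHeron : 4*(a*y)^2 = (c^2-(b-a)^2) * ((b+a)^2-c^2))
    (hkey : c^2 < 2*a*b + b^2 - a^2) :
    ∃ t : ℝ, 0 < t ∧
      t = 2 * Real.sqrt (c ^ 2 - (b - a) ^ 2) /
        (Real.sqrt ((3 * b - a) ^ 2 - c ^ 2) + Real.sqrt ((b + a) ^ 2 - c ^ 2)) ∧
      b*(b-a)*t^2 + (a*y)*t = (c^2-(b-a)^2)/2 ∧ b*t ≤ y := by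
  have hb0 : 0 < b := lt_of_lt_of_le ha0 hab
  have hP0 : (0:ℝ) < c^2 - (b-a)^2 := by nlinarith
  have hPY : (0:ℝ) < (c^2-(b-a)^2) * ((b+a)^2-c^2) := by rw [← hHeron]; positivity
  have hY0 : (0:ℝ) < (b+a)^2 - c^2 := by
    rcases mul_pos_iff.mp hPY with ⟨_, h'⟩ | ⟨h', _⟩
    · exact h'
    · linarith [hP0]
  have hX0 : (0:ℝ) < (3*b-a)^2 - c^2 := by
    nlinarith [hY0, mul_nonneg hb0.le (sub_nonneg.2 hab)]
  set sP := Real.sqrt (c^2 - (b-a)^2) with hsPdef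
  set sX := Real.sqrt ((3*b-a)^2 - c^2) with hsXdef
  set sY := Real.sqrt ((b+a)^2 - c^2) with hsYdef
  have hsP2 : sP^2 = c^2 - (b-a)^2 := Real.sq_sqrt hP0.le
  have hsX2 : sX^2 = (3*b-a)^2 - c^2 := Real.sq_sqrt hX0.le
  have hsY2 : sY^2 = (b+a)^2 - c^2 := Real.sq_sqrt hY0.le
  have hsP0 : 0 < sP := Real.sqrt_pos.2 hP0
  have hsX0 : 0 < sX := Real.sqrt_pos.2 hX0
  have hsY0 : 0 < sY := Real.sqrt_pos.2 hY0
  have hden0 : (0:ℝ) < sX + sY := by positivity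
  have hay : 2*(a*y) = sP * sY := by
    have h1 : (2*(a*y))^2 = (sP*sY)^2 := by
      linear_combination hHeron - (c^2-(b-a)^2)*hsY2 - sY^2*hsP2
    have h2 : (0:ℝ) ≤ 2*(a*y) := by positivity
    have h3 : (0:ℝ) ≤ sP*sY := by positivity
    calc 2*(a*y) = Real.sqrt ((2*(a*y))^2) := (Real.sqrt_sq h2).symm
    _ = Real.sqrt ((sP*sY)^2) := by rw [h1]
    _ = sP*sY := Real.sqrt_sq h3
  set t := 2*sP/(sX+sY) with htdef
  have ht0 : 0 < t := by positivity
  have h4 : t * (sX+sY) = 2*sP := by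
    rw [htdef]; field_simp
  have h5 : (b*(b-a)*t^2 + (a*y)*t)*(sX+sY)^2 = 4*b*(b-a)*sP^2 + sP^2*sY*(sX+sY) := by
    linear_combination (b*(b-a)*(t*(sX+sY)+2*sP) + (sX+sY)*(a*y))*h4 + (sX+sY)*sP*hay
  have h6 : 4*b*(b-a)*sP^2 + sP^2*sY*(sX+sY) = ((c^2-(b-a)^2)/2)*(sX+sY)^2 := by
    linear_combination (4*b*(b-a) + sY*sX + sY^2)*hsP2 + ((c^2-(b-a)^2)/2)*hsY2
      - ((c^2-(b-a)^2)/2)*hsX2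
  have hquad : b*(b-a)*t^2 + (a*y)*t = (c^2-(b-a)^2)/2 := by
    have h7 := h5.trans h6
    exact mul_right_cancel₀ (by positivity) h7
  have hXYP : (c^2-(b-a)^2)^2 < ((3*b-a)^2-c^2)*((b+a)^2-c^2) := by
    have e : ((3*b-a)^2-c^2)*((b+a)^2-c^2) - (c^2-(b-a)^2)^2
        = 8*(b*b)*(2*a*b+b^2-a^2-c^2) := by ring
    linarith [e, mul_pos (mul_pos hb0 hb0) (sub_pos.2 hkey)]
  have hsXY : c^2-(b-a)^2 ≤ sX*sY := by
    have hmul : sX*sY = Real.sqrt (((3*b-a)^2-c^2)*((b+a)^2-c^2)) :=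
      (Real.sqrt_mul hX0.le _).symm
    calc c^2-(b-a)^2 = Real.sqrt ((c^2-(b-a)^2)^2) := (Real.sqrt_sq hP0.le).symm
    _ ≤ Real.sqrt (((3*b-a)^2-c^2)*((b+a)^2-c^2)) := Real.sqrt_le_sqrt hXYP.le
    _ = sX*sY := hmul.symm
  have hK : b*t ≤ y := by
    have e0 : b*t = (2*b*sP)/(sX+sY) := by rw [htdef]; ring
    rw [e0, div_le_iff₀ hden0]
    have e : y*(sX+sY)*(2*a) = sP*(sX*sY) + sP*sY^2 := by
      linear_combination (sX+sY)*hay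
    have g1 : sP*(c^2-(b-a)^2) ≤ sP*(sX*sY) := mul_le_mul_of_nonneg_left hsXY hsP0.le
    have g4 : sP*sY^2 = sP*((b+a)^2-c^2) := by rw [hsY2]
    have g3 : (2*b*sP)*(2*a) ≤ (y*(sX+sY))*(2*a) := by linarith [e, g1, g4]
    have h2a : (0:ℝ) < 2*a := by linarith
    exact le_of_mul_le_mul_right g3 h2a
  exact ⟨t, ht0, htdef, hquad, hK⟩

private lemma gather_aux_ADs (a b c y σ Q t s : ℝ) (ha0 : 0 < a)
    (hc2 : a^2*c^2 = (σ+a^2/2)^2 + a^2*y^2) (hb2 : a^2*b^2 = (σ-a^2/2)^2 + a^2*y^2)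
    (hQ : Q*a^2 = σ^2) (hquad : b*(b-a)*t^2 + (a*y)*t = (c^2-(b-a)^2)/2)
    (hs2 : s^2 = 1 + t^2) :
    Q + (y - a*t/2)^2 = ((2*b-a)*s/2)^2 := by
  have hm : (Q + (y - a*t/2)^2) * (4*a^2) = (((2*b-a)*s/2)^2) * (4*a^2) := by
    linear_combination 4*hQ - a^2*(2*b-a)^2*hs2 - 2*hc2 - 2*hb2 - 4*a^2*hquad
  exact mul_right_cancel₀ (by positivity) hm

private lemma gather_aux_lower (a b y Q t s h AD BD : ℝ) (ha0 : 0 < a) (hab : a ≤ b)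
    (hy0 : 0 < y) (hQ0 : 0 ≤ Q) (ht0 : 0 < t) (hs2 : s^2 = 1 + t^2) (hs0 : 0 < s)
    (hK : b*t ≤ y) (hADs : Q + (y - a*t/2)^2 = ((2*b-a)*s/2)^2)
    (hAD0 : 0 ≤ AD) (hBD0 : 0 ≤ BD)
    (hAD2 : AD^2 = Q + (y-h)^2) (hBD2 : BD^2 = a^2/4 + h^2) :
    s ≤ max (2*BD/a) ((AD+BD)/b) := by
  have hb0 : 0 < b := lt_of_lt_of_le ha0 hab
  rcases le_or_gt (a*s/2) BD with hcase | hcase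
  · refine le_max_of_le_left ?_
    rw [le_div_iff₀ ha0]
    linarith
  · refine le_max_of_le_right ?_
    rw [le_div_iff₀ hb0]
    have h2b : (0:ℝ) < 2*b - a := by linarith
    set ADs : ℝ := (2*b-a)*s/2 with hADsdef
    set BDs : ℝ := a*s/2 with hBDsdef
    have hADs0 : 0 < ADs := by
      rw [hADsdef]; exact div_pos (mul_pos h2b hs0) two_pos
    have hBDs0 : 0 < BDs := by
      rw [hBDsdef]; positivity
    have hADs2 : ADs^2 = Q + (y - a*t/2)^2 := hADs.symm
    have hBDs2 : BDs^2 = a^2/4 + (a*t/2)^2 := by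
      rw [hBDsdef]; linear_combination (a^2/4)*hs2
    have hBDsq : BD^2 < BDs^2 := by nlinarith [hcase, hBD0, hBDs0]
    have hh : h ≤ a*t/2 := by nlinarith [hBDsq, hBD2, hBDs2, mul_pos ha0 ht0]
    have hCS1 : Q + (y-h)*(y - a*t/2) ≤ AD * ADs :=
      gather_aux_cs Q (y-h) (y - a*t/2) AD ADs hQ0 hAD0 hADs0.le hAD2 hADs2
    have hCS2 : a^2/4 + h*(a*t/2) ≤ BD * BDs :=
      gather_aux_cs (a^2/4) h (a*t/2) BD BDs (by positivity) hBD0 hBDs0.le hBD2 hBDs2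
    have h1 : (Q + (y-h)*(y - a*t/2))*BDs ≤ (AD*ADs)*BDs :=
      mul_le_mul_of_nonneg_right hCS1 hBDs0.le
    have h2 : (a^2/4 + h*(a*t/2))*ADs ≤ (BD*BDs)*ADs :=
      mul_le_mul_of_nonneg_right hCS2 hADs0.le
    have h4 : 0 ≤ (a*t/2 - h) * ((y - a*t/2)*BDs - (a*t/2)*ADs) := by
      apply mul_nonneg (by linarith)
      have e : (y - a*t/2)*BDs - (a*t/2)*ADs = (a*s/2)*(y - b*t) := by
        rw [hADsdef, hBDsdef]; ring
      rw [e]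
      have : (0:ℝ) ≤ a*s/2 := by positivity
      exact mul_nonneg this (by linarith)
    have e1 : (Q + (y-h)*(y - a*t/2))*BDs
        = ADs^2*BDs + (y - a*t/2)*(a*t/2 - h)*BDs := by
      linear_combination (-BDs)*hADs2
    have e2 : (a^2/4 + h*(a*t/2))*ADs
        = BDs^2*ADs + (a*t/2)*(h - a*t/2)*ADs := by
      linear_combination (-ADs)*hBDs2
    have h3 : (ADs+BDs)*(ADs*BDs) ≤ (Q + (y-h)*(y - a*t/2))*BDs + (a^2/4 + h*(a*t/2))*ADs := by
      rw [e1, e2]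
      linarith [h4]
    have hfin : (ADs+BDs)*(ADs*BDs) ≤ (AD+BD)*(ADs*BDs) := by
      calc (ADs+BDs)*(ADs*BDs) ≤ (Q + (y-h)*(y - a*t/2))*BDs + (a^2/4 + h*(a*t/2))*ADs := h3
      _ ≤ (AD*ADs)*BDs + (BD*BDs)*ADs := add_le_add h1 h2
      _ = (AD+BD)*(ADs*BDs) := by ring
    have h5 : ADs + BDs ≤ AD + BD :=
      le_of_mul_le_mul_right hfin (mul_pos hADs0 hBDs0)
    have h6 : ADs + BDs = b*s := by rw [hADsdef, hBDsdef]; ring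
    linarith

private lemma gather_aux_sineqg (a b c y cg sg : ℝ) (hy0 : 0 < y) (hsg0 : 0 ≤ sg)
    (hb0 : 0 < b) (ha0 : 0 < a)
    (hcg : cg*(2*a*b) = a^2+b^2-c^2) (hsq : sg^2 = 1 - cg^2)
    (hHeron : 4*(a*y)^2 = (c^2-(b-a)^2)*((b+a)^2-c^2)) : sg*b = y := by
  have h1 : (sg*b)^2*(4*a^2) = y^2*(4*a^2) := by
    linear_combination 4*a^2*b^2*hsq - (cg*(2*a*b) + (a^2+b^2-c^2))*hcg - hHeron
  have h2 := mul_right_cancel₀ (show (4*a^2:ℝ) ≠ 0 by positivity) h1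
  have h3 : 0 ≤ sg*b := mul_nonneg hsg0 hb0.le
  calc sg*b = Real.sqrt ((sg*b)^2) := (Real.sqrt_sq h3).symm
  _ = Real.sqrt (y^2) := by rw [h2]
  _ = y := Real.sqrt_sq hy0.le

private lemma gather_aux_sineqb (a b c y cb sb : ℝ) (hy0 : 0 < y) (hsb0 : 0 ≤ sb)
    (hc0 : 0 < c) (ha0 : 0 < a)
    (hcb : cb*(2*c*a) = c^2+a^2-b^2) (hsq : sb^2 = 1 - cb^2)
    (hHeron : 4*(a*y)^2 = (c^2-(b-a)^2)*((b+a)^2-c^2)) : sb*c = y := by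
  have h1 : (sb*c)^2*(4*a^2) = y^2*(4*a^2) := by
    linear_combination 4*a^2*c^2*hsq - (cb*(2*c*a) + (c^2+a^2-b^2))*hcb - hHeron
  have h2 := mul_right_cancel₀ (show (4*a^2:ℝ) ≠ 0 by positivity) h1
  have h3 : 0 ≤ sb*c := mul_nonneg hsb0 hc0.le
  calc sb*c = Real.sqrt ((sb*c)^2) := (Real.sqrt_sq h3).symm
  _ = Real.sqrt (y^2) := by rw [h2]
  _ = y := Real.sqrt_sq hy0.le

private lemma gather_aux_key (a b c y cb sb sg : ℝ) (ha0 : 0 < a) (hb0 : 0 < b)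
    (hc0 : 0 < c) (hy0 : 0 < y) (hbc : b ≤ c)
    (hcb : cb*(2*c*a) = c^2+a^2-b^2) (hsb : sb*c = y) (hsg : sg*b = y)
    (htan : sg < sb / cb) : c^2 < 2*a*b + b^2 - a^2 := by
  have hcb0 : 0 < cb := by nlinarith [hcb, mul_pos hc0 ha0, hbc]
  have h1 : sg*cb < sb := (lt_div_iff₀ hcb0).mp htan
  have h2 : 2*a*b*c*(sg*cb) < 2*a*b*c*sb := by
    have hpos : (0:ℝ) < 2*a*b*c := by positivity
    exact mul_lt_mul_of_pos_left h1 hpos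
  have e1 : 2*a*b*c*(sg*cb) = y*(c^2+a^2-b^2) := by
    linear_combination (cb*(2*c*a))*hsg + y*hcb
  have e2 : 2*a*b*c*sb = 2*a*b*y := by linear_combination 2*a*b*hsb
  rw [e1, e2] at h2
  have h3 : y*(c^2+a^2-b^2) < y*(2*a*b) := by linarith
  have h4 := lt_of_mul_lt_mul_left (by linarith [h3] : y*(c^2+a^2-b^2) < y*(2*a*b)) hy0.le
  linarith

theorem gather_three_one_byzantine_tan_gt_sin
    (A B C : EuclideanSpace ℝ (Fin 2))
    (hncol : ¬ Collinear ℝ ({A, B, C} : Set (EuclideanSpace ℝ (Fin 2))))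
    (a b c : ℝ) (ha : a = dist B C) (hb : b = dist A C) (hc : c = dist A B)
    (hab : a ≤ b) (hbc : b ≤ c)
    (β γ : ℝ) (hβ : β = ∠ A B C) (hγ : γ = ∠ B C A)
    (f : EuclideanSpace ℝ (Fin 2) → ℝ)
    (hf : ∀ D, f D = max (2 * dist B D / a) ((dist A D + dist B D) / b))
    (h : Real.sin γ < Real.tan β) :
    ∃ φ ∈ Set.Ioo (0 : ℝ) (Real.pi / 2),
      Real.tan φ = 2 * Real.sqrt (c ^ 2 - (b - a) ^ 2) /
        (Real.sqrt ((3 * b - a) ^ 2 - c ^ 2) + Real.sqrt ((b + a) ^ 2 - c ^ 2)) ∧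
      ∃ Dstar : EuclideanSpace ℝ (Fin 2),
        dist Dstar B = dist Dstar C ∧
        dist Dstar (midpoint ℝ B C) = (a / 2) * Real.tan φ ∧
        line[ℝ, B, C].SSameSide A Dstar ∧
        f Dstar = 1 / Real.cos φ ∧
        ∀ D : EuclideanSpace ℝ (Fin 2), dist D B = dist D C →
          1 / Real.cos φ ≤ f D := by
  classical
  have hBC : B ≠ C := by
    rintro rfl
    refine hncol ?_
    have he : ({A, B, B} : Set (EuclideanSpace ℝ (Fin 2))) = {A, B} := by simp
    rw [he]
    exact collinear_pair ℝ A B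
  have ha0 : (0:ℝ) < a := ha ▸ dist_pos.2 hBC
  have hb0 : (0:ℝ) < b := lt_of_lt_of_le ha0 hab
  have hc0 : (0:ℝ) < c := lt_of_lt_of_le hb0 hbc
  set M : EuclideanSpace ℝ (Fin 2) := midpoint ℝ B C with hMdef
  set v : EuclideanSpace ℝ (Fin 2) := C - B with hvdef
  have hvnorm : ‖v‖ = a := by rw [ha, dist_eq_norm, norm_sub_rev]
  have hvne : v ≠ 0 := by
    intro h0
    rw [h0, norm_zero] at hvnorm
    exact ha0.ne hvnorm
  have hMB : M - B = (2⁻¹ : ℝ) • v := by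
    have := midpoint_sub_left (R := ℝ) B C
    simpa [hMdef, hvdef] using this
  have hMC : M - C = -((2⁻¹ : ℝ) • v) := by
    have h2 : M - C = (⅟2 : ℝ) • (B - C) := midpoint_sub_right (R := ℝ) B C
    rw [h2]
    have hBCv : (B - C) = -v := by rw [hvdef]; abel
    rw [hBCv]
    simp [invOf_eq_inv]
  set σ : ℝ := inner ℝ (A - M) v with hσdef
  set w : EuclideanSpace ℝ (Fin 2) := (A - M) - (σ / a^2) • v with hwdef
  set y : ℝ := ‖w‖ with hydef
  have hA : A - M = (σ / a^2) • v + w := by rw [hwdef]; abel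
  have hwv : (inner ℝ w v : ℝ) = 0 := by
    rw [hwdef, inner_sub_left, real_inner_smul_left, real_inner_self_eq_norm_sq, hvnorm,
      ← hσdef]
    field_simp
    ring
  have hwne : w ≠ 0 := by
    intro h0
    refine hncol ?_
    apply collinear_insert_of_mem_affineSpan_pair
    have hmem := smul_vsub_vadd_mem_affineSpan_pair (σ / a^2 + 2⁻¹ : ℝ) B C
    have heq : (σ / a^2 + 2⁻¹ : ℝ) • (C -ᵥ B) +ᵥ B = A := by
      rw [vsub_eq_sub, vadd_eq_add, ← hvdef]
      have hA' : A - M = (σ / a^2) • v := sub_eq_zero.mp h0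
      have hMB' : M = (2⁻¹ : ℝ) • v + B := by rw [← hMB]; abel
      have hAe : A = (σ / a^2) • v + M := by rw [← hA']; abel
      rw [hAe, hMB']
      module
    rwa [heq] at hmem
  have hy0 : (0:ℝ) < y := by rw [hydef]; exact norm_pos_iff.2 hwne
  have key : ∀ (r k : ℝ), ‖r • v + k • w‖^2 = r^2 * a^2 + k^2 * y^2 := by
    intro r k
    rw [norm_add_sq_real, real_inner_smul_left, real_inner_smul_right, norm_smul, norm_smul,
      real_inner_comm, hwv]
    simp [hvnorm, ← hydef, mul_pow, sq_abs]
  have hc2 : a^2 * c^2 = (σ + a^2/2)^2 + a^2 * y^2 := by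
    have hAB : A - B = (σ / a^2 + 2⁻¹) • v + (1:ℝ) • w := by
      have e1 : A - B = (A - M) + (M - B) := by abel
      rw [hA, hMB] at e1
      rw [e1]; module
    have e2 : c^2 = ‖A - B‖^2 := by rw [hc, dist_eq_norm]
    rw [e2, hAB, key]
    field_simp
  have hb2 : a^2 * b^2 = (σ - a^2/2)^2 + a^2 * y^2 := by
    have hAC : A - C = (σ / a^2 - 2⁻¹) • v + (1:ℝ) • w := by
      have e1 : A - C = (A - M) + (M - C) := by abel
      rw [hA, hMC] at e1
      rw [e1]; module
    have e2 : b^2 = ‖A - C‖^2 := by rw [hb, dist_eq_norm]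
    rw [e2, hAC, key]
    field_simp
  have hσval : 2 * σ = c^2 - b^2 := by
    have h2 : a^2 ≠ 0 := by positivity
    have h1 : (2*σ) * a^2 = (c^2 - b^2) * a^2 := by linear_combination hb2 - hc2
    exact mul_right_cancel₀ h2 h1
  have hHeron : 4*(a*y)^2 = (c^2-(b-a)^2) * ((b+a)^2-c^2) := by
    linear_combination (-4)*hc2 - (c^2-b^2+2*σ+2*a^2)*hσval
  -- law of cosines and angles
  have hlaw1 : b * b = c * c + a * a - 2 * c * a * Real.cos β := by
    have hcb : dist C B = a := by rw [dist_comm]; exact ha.symm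
    have hlc := EuclideanGeometry.law_cos A B C
    rw [← hβ, hcb, ← hb, ← hc] at hlc
    exact hlc
  have hlaw2 : c * c = a * a + b * b - 2 * a * b * Real.cos γ := by
    have hba : dist B A = c := by rw [dist_comm]; exact hc.symm
    have hlc := EuclideanGeometry.law_cos B C A
    rw [← hγ, hba, ← ha, ← hb] at hlc
    exact hlc
  have hcosβval : Real.cos β * (2*c*a) = c^2+a^2-b^2 := by linear_combination hlaw1
  have hcosγval : Real.cos γ * (2*a*b) = a^2+b^2-c^2 := by linear_combination hlaw2
  have hsinβ0 : 0 ≤ Real.sin β := by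
    rw [hβ]; exact Real.sin_nonneg_of_nonneg_of_le_pi (angle_nonneg _ _ _) (angle_le_pi _ _ _)
  have hsinγ0 : 0 ≤ Real.sin γ := by
    rw [hγ]; exact Real.sin_nonneg_of_nonneg_of_le_pi (angle_nonneg _ _ _) (angle_le_pi _ _ _)
  have hsinβ : Real.sin β * c = y :=
    gather_aux_sineqb a b c y (Real.cos β) (Real.sin β) hy0 hsinβ0 hc0 ha0 hcosβval
      (Real.sin_sq β) hHeron
  have hsinγ : Real.sin γ * b = y :=
    gather_aux_sineqg a b c y (Real.cos γ) (Real.sin γ) hy0 hsinγ0 hb0 ha0 hcosγval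
      (Real.sin_sq γ) hHeron
  have hkey : c^2 < 2*a*b + b^2 - a^2 := by
    rw [Real.tan_eq_sin_div_cos] at h
    exact gather_aux_key a b c y (Real.cos β) (Real.sin β) (Real.sin γ) ha0 hb0 hc0 hy0 hbc
      hcosβval hsinβ hsinγ h
  obtain ⟨t, ht0, htval, hquad, hK⟩ := gather_aux_tfacts a b c y ha0 hab hbc hy0 hHeron hkey
  have hQm : ((σ/a)^2)*a^2 = σ^2 := by field_simp
  have hQ0 : (0:ℝ) ≤ (σ/a)^2 := by positivity
  set s : ℝ := Real.sqrt (1+t^2) with hsdef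
  have hs2 : s^2 = 1+t^2 := Real.sq_sqrt (by positivity)
  have hs0 : 0 < s := Real.sqrt_pos.2 (by positivity)
  have hADsid : (σ/a)^2 + (y - a*t/2)^2 = ((2*b-a)*s/2)^2 :=
    gather_aux_ADs a b c y σ ((σ/a)^2) t s ha0 hc2 hb2 hQm hquad hs2
  have h2b : (0:ℝ) < 2*b - a := by linarith only [hab, ha0]
  have hcos : 1 / Real.cos (Real.arctan t) = s := by
    rw [Real.cos_arctan, one_div_one_div, hsdef]
  refine ⟨Real.arctan t, ⟨?_, Real.arctan_lt_pi_div_two t⟩, ?_, ?_⟩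
  · have h1 := Real.arctan_strictMono ht0
    rwa [Real.arctan_zero] at h1
  · rw [Real.tan_arctan]; exact htval
  set κ : ℝ := a*t/(2*y) with hκdef
  have hκ0 : 0 < κ := by rw [hκdef]; positivity
  have hκy : κ*y = a*t/2 := by rw [hκdef]; field_simp
  set Dstar : EuclideanSpace ℝ (Fin 2) := κ • w + M with hDdef
  have hDmB : Dstar - B = (2⁻¹:ℝ) • v + κ • w := by
    calc Dstar - B = κ • w + (M - B) := by rw [hDdef]; abel
    _ = (2⁻¹:ℝ) • v + κ • w := by rw [hMB]; abel
  have hDmC : Dstar - C = (-2⁻¹:ℝ) • v + κ • w := by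
    calc Dstar - C = κ • w + (M - C) := by rw [hDdef]; abel
    _ = (-2⁻¹:ℝ) • v + κ • w := by rw [hMC]; rw [neg_smul]; abel
  have hnormval : ∀ (r : ℝ), r^2 = (2⁻¹:ℝ)^2 → ‖r • v + κ • w‖ = a*s/2 := by
    intro r hr
    have hn2 : ‖r • v + κ • w‖^2 = (a*s/2)^2 := by
      rw [key]
      have e1 : κ^2*y^2 = (a*t/2)^2 := by rw [← hκy]; ring
      rw [hr, e1]
      linear_combination (-(a^2/4))*hs2
    rw [← Real.sqrt_sq (norm_nonneg _), hn2, Real.sqrt_sq (by positivity)]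
  have hDB : dist Dstar B = a*s/2 := by
    rw [dist_eq_norm, hDmB]; exact hnormval _ (by norm_num)
  have hDC : dist Dstar C = a*s/2 := by
    rw [dist_eq_norm, hDmC]; exact hnormval _ (by norm_num)
  have hAmD : A - Dstar = (σ/a^2) • v + (1-κ) • w := by
    calc A - Dstar = (A - M) - κ • w := by rw [hDdef]; abel
    _ = (σ/a^2) • v + (1-κ) • w := by rw [hA]; module
  have hADval : dist A Dstar = (2*b-a)*s/2 := by
    rw [dist_eq_norm, hAmD]
    have hn2 : ‖(σ/a^2) • v + (1-κ) • w‖^2 = ((2*b-a)*s/2)^2 := by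
      rw [key]
      have e1 : (σ/a^2)^2*a^2 = (σ/a)^2 := by field_simp
      have e2 : (1-κ)^2*y^2 = (y - a*t/2)^2 := by
        have : (1-κ)^2*y^2 = (y - κ*y)^2 := by ring
        rw [this, hκy]
      rw [e1, e2, hADsid]
    rw [← Real.sqrt_sq (norm_nonneg _), hn2, Real.sqrt_sq (by positivity)]
  refine ⟨Dstar, by rw [hDB, hDC], ?_, ?_, ?_, ?_⟩
  · -- distance to midpoint
    rw [dist_eq_norm]
    have e1 : Dstar - M = κ • w := by rw [hDdef]; abel
    rw [e1, norm_smul, Real.norm_eq_abs, abs_of_pos hκ0, ← hydef, Real.tan_arctan]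
    rw [hκdef]; field_simp
  · -- same side
    have hMmem : M ∈ line[ℝ, B, C] := by
      have h1 := smul_vsub_vadd_mem_affineSpan_pair (2⁻¹:ℝ) B C
      have heq : (2⁻¹:ℝ) • (C -ᵥ B) +ᵥ B = M := by
        rw [vsub_eq_sub, vadd_eq_add, ← hvdef]
        have : M = (2⁻¹ : ℝ) • v + B := by rw [← hMB]; abel
        rw [this]
      rwa [heq] at h1
    have hp1mem : (σ/a^2) • v + M ∈ line[ℝ, B, C] := by
      have h1 := smul_vsub_vadd_mem_affineSpan_pair (σ/a^2 + 2⁻¹:ℝ) B C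
      have heq : (σ/a^2 + 2⁻¹:ℝ) • (C -ᵥ B) +ᵥ B = (σ/a^2) • v + M := by
        rw [vsub_eq_sub, vadd_eq_add, ← hvdef]
        have : M = (2⁻¹ : ℝ) • v + B := by rw [← hMB]; abel
        rw [this]
        module
      rwa [heq] at h1
    have hAnot : A ∉ line[ℝ, B, C] := fun hmem =>
      hncol (collinear_insert_of_mem_affineSpan_pair hmem)
    have heA : A -ᵥ ((σ/a^2) • v + M) = w := by
      rw [vsub_eq_sub, hwdef]; abel
    have heD : Dstar -ᵥ M = κ • w := by rw [vsub_eq_sub, hDdef]; abel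
    have hDnot : Dstar ∉ line[ℝ, B, C] := by
      intro hmem
      have hd : Dstar -ᵥ M ∈ (line[ℝ, B, C]).direction :=
        AffineSubspace.vsub_mem_direction hmem hMmem
      rw [direction_affineSpan, vectorSpan_pair] at hd
      obtain ⟨r, hr⟩ := Submodule.mem_span_singleton.mp hd
      have h1 : (inner ℝ (Dstar -ᵥ M) w : ℝ) = κ * y^2 := by
        rw [heD, real_inner_smul_left, real_inner_self_eq_norm_sq, ← hydef]
      have h2 : (inner ℝ (Dstar -ᵥ M) w : ℝ) = 0 := by
        rw [← hr, real_inner_smul_left]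
        have : (inner ℝ (B -ᵥ C) w : ℝ) = 0 := by
          rw [vsub_eq_sub]
          have hBCv : (B - C) = -v := by rw [hvdef]; abel
          rw [hBCv, inner_neg_left, real_inner_comm, hwv, neg_zero]
        rw [this, mul_zero]
      rw [h1] at h2
      exact (mul_pos hκ0 (pow_pos hy0 2)).ne' h2
    exact ⟨⟨(σ/a^2) • v + M, hp1mem, M, hMmem, by
      rw [heA, heD]; exact SameRay.sameRay_nonneg_smul_right w hκ0.le⟩, hAnot, hDnot⟩
  · -- value of f at Dstar
    rw [hf, hcos]
    have e1 : 2 * dist B Dstar / a = s := by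
      rw [dist_comm, hDB]; field_simp
    have e2 : (dist A Dstar + dist B Dstar) / b = s := by
      rw [dist_comm B Dstar, hDB, hADval]; field_simp; ring
    rw [e1, e2, max_self]
  · -- lower bound
    intro D hD
    rw [hcos, hf]
    have horth : (inner ℝ (D - M) v : ℝ) = 0 := by
      have h1 : ‖D - B‖^2 = ‖D - C‖^2 := by rw [← dist_eq_norm, ← dist_eq_norm, hD]
      have e1 : D - B = (D - M) + (2⁻¹:ℝ) • v := by
        have : D - B = (D - M) + (M - B) := by abel
        rw [this, hMB]
      have e2 : D - C = (D - M) + (-2⁻¹:ℝ) • v := by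
        have : D - C = (D - M) + (M - C) := by abel
        rw [this, hMC, neg_smul]
      rw [e1, e2, norm_add_sq_real, norm_add_sq_real, real_inner_smul_right,
        real_inner_smul_right] at h1
      have e3 : ‖(-2⁻¹:ℝ) • v‖ = ‖(2⁻¹:ℝ) • v‖ := by
        rw [norm_smul, norm_smul]; norm_num
      rw [e3] at h1
      linarith only [h1]
    have hrank : Module.finrank ℝ ((Submodule.span ℝ {v})ᗮ :
        Submodule ℝ (EuclideanSpace ℝ (Fin 2))) = 1 := by
      have h1 := Submodule.finrank_add_finrank_orthogonal
        (K := (Submodule.span ℝ {v} : Submodule ℝ (EuclideanSpace ℝ (Fin 2))))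
      rw [finrank_span_singleton hvne, finrank_euclideanSpace_fin] at h1
      omega
    have hspan : Submodule.span ℝ {w} = (Submodule.span ℝ {v})ᗮ := by
      apply Submodule.eq_of_le_of_finrank_le
      · exact (Submodule.span_singleton_le_iff_mem _ _).mpr
          (Submodule.mem_orthogonal_singleton_iff_inner_left.mpr hwv)
      · rw [hrank, finrank_span_singleton hwne]
    have hDmem : D - M ∈ Submodule.span ℝ {w} := by
      rw [hspan]
      exact Submodule.mem_orthogonal_singleton_iff_inner_left.mpr horth
    obtain ⟨k, hk⟩ := Submodule.mem_span_singleton.mp hDmem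
    have hBD2 : (dist D B)^2 = a^2/4 + (k*y)^2 := by
      rw [dist_eq_norm]
      have e1 : D - B = (2⁻¹:ℝ) • v + k • w := by
        have h' : D - B = (D - M) + (M - B) := by abel
        rw [h', ← hk, hMB]; abel
      rw [e1, key]
      ring
    have hAD2 : (dist A D)^2 = (σ/a)^2 + (y - k*y)^2 := by
      rw [dist_eq_norm]
      have e1 : A - D = (σ/a^2) • v + (1-k) • w := by
        have h' : A - D = (A - M) - (D - M) := by abel
        rw [h', ← hk, hA]; module
      rw [e1, key]
      have e2 : (σ/a^2)^2*a^2 = (σ/a)^2 := by field_simp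
      rw [e2]
      ring
    have hlow := gather_aux_lower a b y ((σ/a)^2) t s (k*y) (dist A D) (dist D B)
      ha0 hab hy0 hQ0 ht0 hs2 hs0 hK hADsid dist_nonneg dist_nonneg hAD2 hBD2
    rw [dist_comm B D]
    exact hlow
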